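/- If U₁ ⊇ U₂ ⊇ ⋯ is a decreasing sequence of nonempty open subsets of a topological space X in which every locally finite family of nonempty open sets is finite, then ⋂_{i∈ℕ} cl(U_i) ≠ ∅. -/
import Mathlib


def AlphaOpen {X : Type*} [TopologicalSpace X] (A : Set X) : Prop :=
  A ⊆ interior (closure (interior A))

def AlphaClosed {X : Type*} [TopologicalSpace X] (A : Set X) : Prop :=
  AlphaOpen Aᶜ

def AlphaContinuous {X Y : Type*} [TopologicalSpace X] [TopologicalSpace Y]
    (f : X → Y) : Prop :=
  ∀ V : Set Y, IsOpen V → AlphaOpen (f ⁻¹' V)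

def CountablyAlphaCompact (X : Type*) [TopologicalSpace X] : Prop :=
  ∀ U : ℕ → Set X, (∀ n, AlphaOpen (U n)) → (⋃ n, U n) = Set.univ →
    ∃ t : Finset ℕ, (⋃ n ∈ t, U n) = Set.univ

def AlphaCompact (X : Type*) [TopologicalSpace X] : Prop :=
  ∀ 𝒰 : Set (Set X), (∀ A ∈ 𝒰, AlphaOpen A) → ⋃₀ 𝒰 = Set.univ →
    ∃ 𝒱 ⊆ 𝒰, 𝒱.Finite ∧ ⋃₀ 𝒱 = Set.univ

def CountablyCompact (X : Type*) [TopologicalSpace X] : Prop :=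
  ∀ U : ℕ → Set X, (∀ n, IsOpen (U n)) → (⋃ n, U n) = Set.univ →
    ∃ t : Finset ℕ, (⋃ n ∈ t, U n) = Set.univ
theorem stmt18 {X : Type*} [TopologicalSpace X]
    (hX : ∀ S : Set (Set X), (∀ s ∈ S, IsOpen s ∧ s.Nonempty) →
      LocallyFinite (fun s : S => (s : Set X)) → S.Finite)
    (U : ℕ → Set X) (hopen : ∀ i, IsOpen (U i)) (hne : ∀ i, (U i).Nonempty)
    (hdec : Antitone U) : (⋂ i, closure (U i)).Nonempty := by
  by_contra hempty
  rw [Set.not_nonempty_iff_eq_empty] at hempty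
  -- the range of U is locally finite
  have hlf : LocallyFinite (fun s : Set.range U => (s : Set X)) := by
    intro x
    have hx : x ∉ ⋂ i, closure (U i) := by simp [hempty]
    rw [Set.mem_iInter] at hx
    push_neg at hx
    obtain ⟨n, hn⟩ := hx
    refine ⟨(closure (U n))ᶜ, (isClosed_closure.isOpen_compl).mem_nhds hn, ?_⟩
    have : {s : Set.range U | ((s : Set X) ∩ (closure (U n))ᶜ).Nonempty} ⊆
        (fun i : ℕ => (⟨U i, Set.mem_range_self i⟩ : Set.range U)) '' (Set.Iio n) := by
      rintro ⟨s, i, rfl⟩ hs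
      simp only [Set.mem_setOf_eq] at hs
      by_contra hmem
      have hin : n ≤ i := by
        by_contra hlt
        exact hmem ⟨i, Set.mem_Iio.mpr (by omega), rfl⟩
      obtain ⟨y, hy1, hy2⟩ := hs
      exact hy2 (subset_closure (hdec hin hy1))
    exact Set.Finite.subset ((Set.finite_Iio n).image _) this
  have hfin : (Set.range U).Finite :=
    hX (Set.range U) (by rintro s ⟨i, rfl⟩; exact ⟨hopen i, hne i⟩) hlf
  -- finite range ⇒ some value occurs infinitely often
  have := hfin.to_subtype
  obtain ⟨s, hs⟩ := Finite.exists_infinite_fiber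
    (fun i : ℕ => (⟨U i, Set.mem_range_self i⟩ : Set.range U))
  rw [Set.infinite_coe_iff] at hs
  obtain ⟨m, hm⟩ := hs.nonempty
  obtain ⟨x, hx⟩ := hne m
  apply Set.eq_empty_iff_forall_notMem.mp hempty x
  rw [Set.mem_iInter]
  intro i
  obtain ⟨j, hj, hji⟩ := hs.exists_gt i
  have heq : U j = U m := by
    have : (⟨U j, Set.mem_range_self j⟩ : Set.range U) = ⟨U m, Set.mem_range_self m⟩ := by
      simp only [Set.mem_preimage, Set.mem_singleton_iff] at hj hm
      rw [hj, hm]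
    exact congrArg Subtype.val this
  exact subset_closure (hdec hji.le (heq ▸ hx))
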